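/- Let p be a prime and H a finite p-group acting non-trivially on a finite set W. Then there exists a normal subgroup N of H of index p such that at least one H-orbit in W splits into p distinct N-orbits. -/

import Mathlib

open MulAction Subgroup

/-- If `n ∈ M` (a subgroup, normal), orbits are invariant under translation by coset. -/
private lemma orbit_eq_of_rel {H : Type*} [Group H] {W : Type*} [MulAction H W]
    (M : Subgroup H) [M.Normal] (w : W) {g₁ g₂ : H} (hrel : g₁⁻¹ * g₂ ∈ M) :
    MulAction.orbit M (g₁ • w) = MulAction.orbit M (g₂ • w) := by
  have hc : g₁ * (g₁⁻¹ * g₂) * g₁⁻¹ ∈ M := Subgroup.Normal.conj_mem ‹M.Normal› _ hrel g₁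
  have : ((⟨g₁ * (g₁⁻¹ * g₂) * g₁⁻¹, hc⟩ : M) • (g₁ • w)) = g₂ • w := by
    show (g₁ * (g₁⁻¹ * g₂) * g₁⁻¹) • (g₁ • w) = g₂ • w
    rw [← mul_smul]
    group
  rw [← this, MulAction.orbit_smul]

/-- Let `p` be a prime and `H` a finite `p`-group acting non-trivially on a finite set `W`.
Then there exists a normal subgroup `N` of `H` of index `p` such that at least one
`H`-orbit in `W` splits into `p` distinct `N`-orbits. -/
theorem lem_split {p : ℕ} (hp : p.Prime) (H : Type*) [Group H] [Fintype H]
    {e : ℕ} (hcard : Fintype.card H = p ^ e)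
    (W : Type*) [Fintype W] [MulAction H W]
    (hnontriv : ∃ (h : H) (w : W), h • w ≠ w) :
    ∃ N : Subgroup H, N.Normal ∧ N.index = p ∧
      ∃ w : W, {s : Set W | ∃ v ∈ MulAction.orbit H w, s = MulAction.orbit N v}.ncard = p := by
  classical
  haveI : Fact p.Prime := ⟨hp⟩
  obtain ⟨h, w, hw⟩ := hnontriv
  have hpG : IsPGroup p H := IsPGroup.of_card (by simpa [Nat.card_eq_fintype_card] using hcard)
  haveI : Group.IsNilpotent H := hpG.isNilpotent
  have hS : MulAction.stabilizer H w ≠ ⊤ := by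
    intro hS
    exact hw (by simpa using (hS ▸ Subgroup.mem_top h : h ∈ MulAction.stabilizer H w))
  obtain ⟨M, hMco, hSM⟩ :=
    (eq_top_or_exists_le_coatom (MulAction.stabilizer H w)).resolve_left hS
  haveI hMn : M.Normal :=
    Subgroup.NormalizerCondition.normal_of_coatom M normalizerCondition_of_isNilpotent hMco
  -- index of M is p
  have hQp : IsPGroup p (H ⧸ M) := hpG.to_quotient M
  have hidx_card : M.index = Nat.card (H ⧸ M) := Subgroup.index_eq_card M
  have hne1 : Nat.card (H ⧸ M) ≠ 1 := by
    rw [← hidx_card]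
    intro h1
    exact hMco.1 (Subgroup.index_eq_one.mp h1)
  obtain ⟨k, hk⟩ := IsPGroup.iff_card.mp hQp
  have hk0 : k ≠ 0 := by
    rintro rfl
    rw [pow_zero] at hk
    exact hne1 hk
  have hdvd : p ∣ Nat.card (H ⧸ M) := hk ▸ dvd_pow_self p hk0
  obtain ⟨x, hx⟩ := exists_prime_orderOf_dvd_card' p hdvd
  have hx1 : x ≠ 1 := by
    intro h1
    rw [h1, orderOf_one] at hx
    exact hp.one_lt.ne' hx.symm
  -- the subgroup generated by x is everything
  obtain ⟨g, hg⟩ := QuotientGroup.mk'_surjective M x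
  have hKlt : M < Subgroup.comap (QuotientGroup.mk' M) (Subgroup.zpowers x) := by
    constructor
    · intro m hm
      have h1 : (QuotientGroup.mk' M) m = 1 := (QuotientGroup.eq_one_iff m).mpr hm
      show (QuotientGroup.mk' M) m ∈ Subgroup.zpowers x
      rw [h1]; exact one_mem _
    · intro hle
      have hgK : g ∈ Subgroup.comap (QuotientGroup.mk' M) (Subgroup.zpowers x) := by
        simp [Subgroup.mem_comap, hg, Subgroup.mem_zpowers]
      have : g ∈ M := hle hgK
      exact hx1 (by rw [← hg]; exact (QuotientGroup.eq_one_iff g).mpr this)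
  have hKtop := hMco.2 _ hKlt
  have hztop : Subgroup.zpowers x = ⊤ := by
    have := congrArg (Subgroup.map (QuotientGroup.mk' M)) hKtop
    rwa [Subgroup.map_comap_eq_self_of_surjective (QuotientGroup.mk'_surjective M),
      Subgroup.map_top_of_surjective _ (QuotientGroup.mk'_surjective M)] at this
  have hcardQ : Nat.card (H ⧸ M) = p := by
    rw [← hx, ← Nat.card_zpowers, hztop, Subgroup.card_top]
  have hidx : M.index = p := by rw [hidx_card, hcardQ]
  -- now count the M-orbits inside the H-orbit of w
  refine ⟨M, hMn, hidx, w, ?_⟩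
  set Fbar : H ⧸ M → Set W := fun q =>
    Quotient.liftOn' q (fun g => MulAction.orbit M (g • w)) (by
      intro a b hab
      exact orbit_eq_of_rel M w (QuotientGroup.leftRel_apply.mp hab)) with hFbar
  have hFmk : ∀ g : H, Fbar ((QuotientGroup.mk' M) g) = MulAction.orbit M (g • w) := fun g => rfl
  have hrange : {s : Set W | ∃ v ∈ MulAction.orbit H w, s = MulAction.orbit M v}
      = Set.range Fbar := by
    ext s
    constructor
    · rintro ⟨v, ⟨g, rfl⟩, rfl⟩
      exact ⟨(QuotientGroup.mk' M) g, (hFmk g).symm⟩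
    · rintro ⟨q, rfl⟩
      obtain ⟨g, rfl⟩ := QuotientGroup.mk'_surjective M q
      exact ⟨g • w, MulAction.mem_orbit w g, (hFmk g)⟩
  have hinj : Function.Injective Fbar := by
    intro q₁ q₂ heq
    obtain ⟨g₁, rfl⟩ := QuotientGroup.mk'_surjective M q₁
    obtain ⟨g₂, rfl⟩ := QuotientGroup.mk'_surjective M q₂
    rw [hFmk, hFmk] at heq
    have hmem : g₂ • w ∈ MulAction.orbit M (g₁ • w) := heq ▸ MulAction.mem_orbit_self _
    obtain ⟨n, hn⟩ := hmem
    -- hn : n • (g₁ • w) = g₂ • w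
    have hstab : (g₂⁻¹ * ↑n * g₁) • w = w := by
      have hng : (↑n * g₁) • w = g₂ • w := by rw [mul_smul]; exact hn
      calc (g₂⁻¹ * ↑n * g₁) • w = g₂⁻¹ • (↑n * g₁) • w := by rw [mul_assoc, mul_smul]
        _ = g₂⁻¹ • g₂ • w := by rw [hng]
        _ = w := inv_smul_smul g₂ w
    have hstabM : g₂⁻¹ * ↑n * g₁ ∈ M := hSM hstab
    have : g₁⁻¹ * g₂ ∈ M := by
      have hconj : g₁⁻¹ * ↑n * g₁ ∈ M := by
        have := hMn.conj_mem _ n.2 g₁⁻¹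
        simpa using this
      have hmem2 : (g₁⁻¹ * ↑n * g₁) * (g₂⁻¹ * ↑n * g₁)⁻¹ ∈ M := M.mul_mem hconj (M.inv_mem hstabM)
      have heqel : g₁⁻¹ * g₂ = (g₁⁻¹ * ↑n * g₁) * (g₂⁻¹ * ↑n * g₁)⁻¹ := by group
      rw [heqel]
      exact hmem2
    exact (QuotientGroup.eq (a := g₁) (b := g₂)).mpr this
  rw [hrange, ← Nat.card_coe_set_eq, Nat.card_range_of_injective hinj, hcardQ]
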